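/- Let N ≥ 1, let k ∈ {1,…,N} be an integer, and let a = (a_1,…,a_N) ∈ [0,1]^N satisfy Σ_{i=1}^N a_i = k. Then there exists a probability distribution ψ on the k-element subsets of {1,…,N} (i.e., ψ(S) ≥ 0 for each S ⊆ {1,…,N} with |S| = k, and Σ_{S: |S|=k} ψ(S) = 1) such that for every i ∈ {1,…,N}, Σ_{S: |S|=k, i∈S} ψ(S) = a_i. -/
import Mathlib

open Finset

private lemma sum_zero_one {T : Finset ℕ} {a : ℕ → ℝ}
    (h : ∀ i ∈ T, a i = 0 ∨ a i = 1) :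
    ∑ i ∈ T, a i = ((T.filter (fun i => a i = 1)).card : ℝ) := by
  rw [← Finset.sum_filter_add_sum_filter_not T (fun i => a i = 1)]
  have h1 : ∑ i ∈ T.filter (fun i => a i = 1), a i
      = ((T.filter (fun i => a i = 1)).card : ℝ) := by
    rw [Finset.sum_congr rfl (fun i hi => (Finset.mem_filter.mp hi).2)]
    simp
  have h2 : ∑ i ∈ T.filter (fun i => ¬ a i = 1), a i = 0 := by
    apply Finset.sum_eq_zero
    intro i hi
    rcases h i (Finset.mem_filter.mp hi).1 with h0 | h1
    · exact h0
    · exact absurd h1 (Finset.mem_filter.mp hi).2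
  rw [h1, h2]; ring

private lemma base_case (N k : ℕ) (a : ℕ → ℝ)
    (h01 : ∀ i ∈ Finset.Icc 1 N, a i = 0 ∨ a i = 1)
    (hsum : ∑ i ∈ Finset.Icc 1 N, a i = (k : ℝ)) :
    ∃ ψ : Finset ℕ → ℝ,
      (∀ S ∈ (Finset.Icc 1 N).powerset.filter (fun S => S.card = k), 0 ≤ ψ S) ∧
      (∑ S ∈ (Finset.Icc 1 N).powerset.filter (fun S => S.card = k), ψ S = 1) ∧
      (∀ i ∈ Finset.Icc 1 N,
        ∑ S ∈ (Finset.Icc 1 N).powerset.filter (fun S => S.card = k ∧ i ∈ S), ψ S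
          = a i) := by
  set S := (Finset.Icc 1 N).filter (fun i => a i = 1) with hS
  have hcard : S.card = k := by
    have := sum_zero_one h01
    rw [hsum] at this
    exact_mod_cast this.symm
  have hSsub : S ⊆ Finset.Icc 1 N := Finset.filter_subset _ _
  have hSmem : S ∈ (Finset.Icc 1 N).powerset.filter (fun T => T.card = k) := by
    rw [Finset.mem_filter, Finset.mem_powerset]; exact ⟨hSsub, hcard⟩
  refine ⟨fun T => if T = S then 1 else 0, ?_, ?_, ?_⟩
  · intro T _
    dsimp only
    split <;> norm_num
  · have : ∑ T ∈ (Finset.Icc 1 N).powerset.filter (fun T => T.card = k),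
        (if T = S then (1:ℝ) else 0) = if S = S then (1:ℝ) else 0 := by
      apply Finset.sum_eq_single
      · intro b _ hb; exact if_neg hb
      · intro hS'; exact absurd hSmem hS'
    rw [this, if_pos rfl]
  · intro i hi
    by_cases hiS : i ∈ S
    · have hSmem' : S ∈ (Finset.Icc 1 N).powerset.filter (fun T => T.card = k ∧ i ∈ T) := by
        rw [Finset.mem_filter, Finset.mem_powerset]; exact ⟨hSsub, hcard, hiS⟩
      have : ∑ T ∈ (Finset.Icc 1 N).powerset.filter (fun T => T.card = k ∧ i ∈ T),
          (if T = S then (1:ℝ) else 0) = if S = S then (1:ℝ) else 0 := by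
        apply Finset.sum_eq_single
        · intro b _ hb; exact if_neg hb
        · intro hS'; exact absurd hSmem' hS'
      rw [this, if_pos rfl, (Finset.mem_filter.mp hiS).2]
    · have hazero : a i = 0 := by
        rcases h01 i hi with h0 | h1
        · exact h0
        · exact absurd (Finset.mem_filter.mpr ⟨hi, h1⟩) hiS
      rw [hazero]
      apply Finset.sum_eq_zero
      intro T hT
      rw [if_neg]
      rintro rfl
      exact hiS (Finset.mem_filter.mp hT).2.2

private lemma aux (N k : ℕ) :
    ∀ n : ℕ, ∀ a : ℕ → ℝ,
      (∀ i ∈ Finset.Icc 1 N, 0 ≤ a i ∧ a i ≤ 1) →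
      (∑ i ∈ Finset.Icc 1 N, a i = (k : ℝ)) →
      ((Finset.Icc 1 N).filter (fun i => a i ≠ 0 ∧ a i ≠ 1)).card ≤ n →
      ∃ ψ : Finset ℕ → ℝ,
        (∀ S ∈ (Finset.Icc 1 N).powerset.filter (fun S => S.card = k), 0 ≤ ψ S) ∧
        (∑ S ∈ (Finset.Icc 1 N).powerset.filter (fun S => S.card = k), ψ S = 1) ∧
        (∀ i ∈ Finset.Icc 1 N,
          ∑ S ∈ (Finset.Icc 1 N).powerset.filter (fun S => S.card = k ∧ i ∈ S), ψ S
            = a i) := by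
  intro n
  induction n with
  | zero =>
    intro a ha hsum hcard
    apply base_case N k a _ hsum
    intro i hi
    by_contra hcon
    push_neg at hcon
    have : i ∈ (Finset.Icc 1 N).filter (fun i => a i ≠ 0 ∧ a i ≠ 1) :=
      Finset.mem_filter.mpr ⟨hi, hcon⟩
    have := Finset.card_pos.mpr ⟨i, this⟩
    omega
  | succ n ih =>
    intro a ha hsum hcard
    set Fr := (Finset.Icc 1 N).filter (fun i => a i ≠ 0 ∧ a i ≠ 1) with hFr
    by_cases hFr0 : Fr = ∅
    · apply base_case N k a _ hsum
      intro i hi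
      by_contra hcon
      push_neg at hcon
      have : i ∈ Fr := Finset.mem_filter.mpr ⟨hi, hcon⟩
      rw [hFr0] at this
      exact absurd this (Finset.notMem_empty i)
    -- Fr nonempty; show it has at least 2 elements
    have hFr1 : 1 < Fr.card := by
      by_contra hle
      push_neg at hle
      have hpos : 0 < Fr.card := Finset.card_pos.mpr (Finset.nonempty_of_ne_empty hFr0)
      have hone : Fr.card = 1 := by omega
      obtain ⟨i₀, hi₀⟩ := Finset.card_eq_one.mp hone
      have hi₀F : i₀ ∈ Fr := by rw [hi₀]; exact Finset.mem_singleton_self i₀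
      have hi₀Icc : i₀ ∈ Finset.Icc 1 N := (Finset.mem_filter.mp hi₀F).1
      have hi₀ne : a i₀ ≠ 0 ∧ a i₀ ≠ 1 := (Finset.mem_filter.mp hi₀F).2
      -- all other entries are 0 or 1
      have hothers : ∀ i ∈ (Finset.Icc 1 N).erase i₀, a i = 0 ∨ a i = 1 := by
        intro i hi
        have hine : i ≠ i₀ := (Finset.mem_erase.mp hi).1
        have hiIcc : i ∈ Finset.Icc 1 N := (Finset.mem_erase.mp hi).2
        by_contra hcon
        push_neg at hcon
        have : i ∈ Fr := Finset.mem_filter.mpr ⟨hiIcc, hcon⟩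
        rw [hi₀] at this
        exact hine (Finset.mem_singleton.mp this)
      have hsplit : ∑ i ∈ Finset.Icc 1 N, a i
          = a i₀ + ∑ i ∈ (Finset.Icc 1 N).erase i₀, a i :=
        (Finset.add_sum_erase _ a hi₀Icc).symm
      rw [sum_zero_one hothers] at hsplit
      set m := (((Finset.Icc 1 N).erase i₀).filter (fun i => a i = 1)).card with hm
      have hai₀ : a i₀ = (k : ℝ) - (m : ℝ) := by
        rw [hsum] at hsplit; linarith
      have h0 : 0 ≤ a i₀ := (ha i₀ hi₀Icc).1
      have h1 : a i₀ ≤ 1 := (ha i₀ hi₀Icc).2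
      have hlt : (0:ℝ) < ((k:ℤ) - (m:ℤ) : ℤ) := by
        push_cast
        rcases lt_or_eq_of_le h0 with h | h
        · linarith [hai₀ ▸ h]
        · exact absurd h.symm hi₀ne.1
      have hlt1 : (((k:ℤ) - (m:ℤ) : ℤ) : ℝ) < 1 := by
        push_cast
        rcases lt_or_eq_of_le h1 with h | h
        · linarith [hai₀ ▸ h]
        · exact absurd h hi₀ne.2
      have hz0 : (0:ℤ) < (k:ℤ) - (m:ℤ) := by exact_mod_cast hlt
      have hz1 : (k:ℤ) - (m:ℤ) < 1 := by exact_mod_cast hlt1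
      omega
    obtain ⟨i₀, hi₀F, j₀, hj₀F, hij⟩ := Finset.one_lt_card.mp hFr1
    have hi₀Icc : i₀ ∈ Finset.Icc 1 N := (Finset.mem_filter.mp hi₀F).1
    have hj₀Icc : j₀ ∈ Finset.Icc 1 N := (Finset.mem_filter.mp hj₀F).1
    have hi₀ne : a i₀ ≠ 0 ∧ a i₀ ≠ 1 := (Finset.mem_filter.mp hi₀F).2
    have hj₀ne : a j₀ ≠ 0 ∧ a j₀ ≠ 1 := (Finset.mem_filter.mp hj₀F).2
    have hai0 : 0 < a i₀ := lt_of_le_of_ne (ha i₀ hi₀Icc).1 (Ne.symm hi₀ne.1)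
    have hai1 : a i₀ < 1 := lt_of_le_of_ne (ha i₀ hi₀Icc).2 hi₀ne.2
    have haj0 : 0 < a j₀ := lt_of_le_of_ne (ha j₀ hj₀Icc).1 (Ne.symm hj₀ne.1)
    have haj1 : a j₀ < 1 := lt_of_le_of_ne (ha j₀ hj₀Icc).2 hj₀ne.2
    set t₁ := min (1 - a i₀) (a j₀) with ht₁
    set t₂ := min (a i₀) (1 - a j₀) with ht₂
    have ht₁pos : 0 < t₁ := lt_min (by linarith) haj0
    have ht₂pos : 0 < t₂ := lt_min hai0 (by linarith)
    set a' : ℕ → ℝ := fun i => if i = i₀ then a i + t₁ else if i = j₀ then a i - t₁ else a i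
      with ha'
    set a'' : ℕ → ℝ := fun i => if i = i₀ then a i - t₂ else if i = j₀ then a i + t₂ else a i
      with ha''
    have ha'i₀ : a' i₀ = a i₀ + t₁ := by simp [ha']
    have ha'j₀ : a' j₀ = a j₀ - t₁ := by simp [ha', hij.symm, Ne.symm hij]
    have ha''i₀ : a'' i₀ = a i₀ - t₂ := by simp [ha'']
    have ha''j₀ : a'' j₀ = a j₀ + t₂ := by simp [ha'', Ne.symm hij]
    have ha'other : ∀ i, i ≠ i₀ → i ≠ j₀ → a' i = a i := by
      intro i h1 h2; simp [ha', h1, h2]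
    have ha''other : ∀ i, i ≠ i₀ → i ≠ j₀ → a'' i = a i := by
      intro i h1 h2; simp [ha'', h1, h2]
    -- bounds for a'
    have hb' : ∀ i ∈ Finset.Icc 1 N, 0 ≤ a' i ∧ a' i ≤ 1 := by
      intro i hi
      by_cases h1 : i = i₀
      · rw [h1, ha'i₀]
        constructor
        · linarith
        · have : t₁ ≤ 1 - a i₀ := min_le_left _ _
          linarith
      by_cases h2 : i = j₀
      · rw [h2, ha'j₀]
        constructor
        · have : t₁ ≤ a j₀ := min_le_right _ _
          linarith
        · linarith
      rw [ha'other i h1 h2]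
      exact ha i hi
    have hb'' : ∀ i ∈ Finset.Icc 1 N, 0 ≤ a'' i ∧ a'' i ≤ 1 := by
      intro i hi
      by_cases h1 : i = i₀
      · rw [h1, ha''i₀]
        constructor
        · have : t₂ ≤ a i₀ := min_le_left _ _
          linarith
        · linarith
      by_cases h2 : i = j₀
      · rw [h2, ha''j₀]
        constructor
        · linarith
        · have : t₂ ≤ 1 - a j₀ := min_le_right _ _
          linarith
      rw [ha''other i h1 h2]
      exact ha i hi
    -- sums preserved
    have hpair : ({i₀, j₀} : Finset ℕ) ⊆ Finset.Icc 1 N := by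
      intro x hx
      rcases Finset.mem_insert.mp hx with rfl | hx
      · exact hi₀Icc
      · rw [Finset.mem_singleton.mp hx]; exact hj₀Icc
    have hsumdiff : ∀ (b : ℕ → ℝ), (∀ i, i ≠ i₀ → i ≠ j₀ → b i = a i) →
        b i₀ + b j₀ = a i₀ + a j₀ →
        ∑ i ∈ Finset.Icc 1 N, b i = (k : ℝ) := by
      intro b hb hbp
      have : ∑ i ∈ Finset.Icc 1 N, (b i - a i) = ∑ i ∈ ({i₀, j₀} : Finset ℕ), (b i - a i) := by
        symm
        apply Finset.sum_subset hpair
        intro x hx hxn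
        have hx1 : x ≠ i₀ := by
          rintro rfl; exact hxn (Finset.mem_insert_self _ _)
        have hx2 : x ≠ j₀ := by
          rintro rfl; exact hxn (Finset.mem_insert_of_mem (Finset.mem_singleton_self _))
        rw [hb x hx1 hx2]; ring
      rw [Finset.sum_pair hij] at this
      rw [Finset.sum_sub_distrib, hsum] at this
      linarith
    have hsum' : ∑ i ∈ Finset.Icc 1 N, a' i = (k : ℝ) := by
      apply hsumdiff a' ha'other
      rw [ha'i₀, ha'j₀]; ring
    have hsum'' : ∑ i ∈ Finset.Icc 1 N, a'' i = (k : ℝ) := by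
      apply hsumdiff a'' ha''other
      rw [ha''i₀, ha''j₀]; ring
    -- fractional sets shrink
    have hshrink : ∀ (b : ℕ → ℝ), (∀ i, i ≠ i₀ → i ≠ j₀ → b i = a i) →
        (b i₀ = 0 ∨ b i₀ = 1 ∨ b j₀ = 0 ∨ b j₀ = 1) →
        ((Finset.Icc 1 N).filter (fun i => b i ≠ 0 ∧ b i ≠ 1)).card ≤ n := by
      intro b hb hbd
      have hsub : (Finset.Icc 1 N).filter (fun i => b i ≠ 0 ∧ b i ≠ 1) ⊂ Fr := by
        constructor
        · intro x hx
          obtain ⟨hxIcc, hxne⟩ := Finset.mem_filter.mp hx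
          by_cases h1 : x = i₀
          · subst h1; exact hi₀F
          by_cases h2 : x = j₀
          · subst h2; exact hj₀F
          rw [hb x h1 h2] at hxne
          exact Finset.mem_filter.mpr ⟨hxIcc, hxne⟩
        · intro hsup
          rcases hbd with h | h | h | h
          · have := Finset.mem_filter.mp (hsup hi₀F)
            exact this.2.1 h
          · have := Finset.mem_filter.mp (hsup hi₀F)
            exact this.2.2 h
          · have := Finset.mem_filter.mp (hsup hj₀F)
            exact this.2.1 h
          · have := Finset.mem_filter.mp (hsup hj₀F)
            exact this.2.2 h
      have := Finset.card_lt_card hsub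
      omega
    have hcard' : ((Finset.Icc 1 N).filter (fun i => a' i ≠ 0 ∧ a' i ≠ 1)).card ≤ n := by
      apply hshrink a' ha'other
      rcases min_cases (1 - a i₀) (a j₀) with ⟨h, _⟩ | ⟨h, _⟩
      · right; left; rw [ha'i₀, ht₁, h]; ring
      · right; right; left; rw [ha'j₀, ht₁, h]; ring
    have hcard'' : ((Finset.Icc 1 N).filter (fun i => a'' i ≠ 0 ∧ a'' i ≠ 1)).card ≤ n := by
      apply hshrink a'' ha''other
      rcases min_cases (a i₀) (1 - a j₀) with ⟨h, _⟩ | ⟨h, _⟩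
      · left; rw [ha''i₀, ht₂, h]; ring
      · right; right; right; rw [ha''j₀, ht₂, h]; ring
    obtain ⟨ψ', hψ'0, hψ'1, hψ'm⟩ := ih a' hb' hsum' hcard'
    obtain ⟨ψ'', hψ''0, hψ''1, hψ''m⟩ := ih a'' hb'' hsum'' hcard''
    set lam := t₂ / (t₁ + t₂) with hlam
    have htsum : 0 < t₁ + t₂ := by linarith
    have hlam0 : 0 ≤ lam := le_of_lt (div_pos ht₂pos htsum)
    have hlam1 : lam ≤ 1 := by
      rw [hlam, div_le_one htsum]; linarith
    refine ⟨fun S => lam * ψ' S + (1 - lam) * ψ'' S, ?_, ?_, ?_⟩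
    · intro S hS
      have := hψ'0 S hS
      have := hψ''0 S hS
      have h1l : 0 ≤ 1 - lam := by linarith
      positivity
    · rw [Finset.sum_add_distrib, ← Finset.mul_sum, ← Finset.mul_sum, hψ'1, hψ''1]
      ring
    · intro i hi
      rw [Finset.sum_add_distrib, ← Finset.mul_sum, ← Finset.mul_sum,
        hψ'm i hi, hψ''m i hi]
      by_cases h1 : i = i₀
      · rw [h1, ha'i₀, ha''i₀, hlam]
        field_simp
        ring
      by_cases h2 : i = j₀
      · rw [h2, ha'j₀, ha''j₀, hlam]
        field_simp
        ring
      rw [ha'other i h1 h2, ha''other i h1 h2]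
      ring

/-- any vector of marginal inclusion probabilities in the `k`-uniform
matroid base polytope (entries in [0,1] summing to `k`) is realizable as the
first-order inclusion probabilities of a random `k`-element subset of `{1,…,N}`. -/
theorem stmt4 (N k : ℕ) (hN : 1 ≤ N) (hk : k ∈ Finset.Icc 1 N)
    (a : ℕ → ℝ) (ha : ∀ i ∈ Finset.Icc 1 N, 0 ≤ a i ∧ a i ≤ 1)
    (hsum : ∑ i ∈ Finset.Icc 1 N, a i = (k : ℝ)) :
    ∃ ψ : Finset ℕ → ℝ,
      (∀ S ∈ (Finset.Icc 1 N).powerset.filter (fun S => S.card = k), 0 ≤ ψ S) ∧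
      (∑ S ∈ (Finset.Icc 1 N).powerset.filter (fun S => S.card = k), ψ S = 1) ∧
      (∀ i ∈ Finset.Icc 1 N,
        ∑ S ∈ (Finset.Icc 1 N).powerset.filter (fun S => S.card = k ∧ i ∈ S), ψ S
          = a i) := by
  exact aux N k ((Finset.Icc 1 N).filter (fun i => a i ≠ 0 ∧ a i ≠ 1)).card a ha hsum le_rfl
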